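/- Exact norm formula for the two-body stability operator at conjugate spectral parameters (Lemma A.1(vii), equation (1-M)): In the block model, for any constant τ > 0 and any z = E + iη with |z| ≤ τ^{−1} and η > 0, and for z₁ = conj(z₂) ∈ {z, z̄}, the D×D matrix M̂(z₁,z₂) with entries M̂(z₁,z₂)_{ab} = D⟨M(z₁)E_a M(z₂)E_b⟩ has nonnegative entries, its Perron–Frobenius eigenvalue equals Im m(z)/(Im m(z) + η) with eigenvector (1,…,1)ᵀ, and consequently ‖(I − M̂(z₁,z₂))^{−1}‖ = (Im m(z) + η)/η, where ‖·‖ is the operator norm on D×D matrices. -/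

import Mathlib

open Matrix Filter
open scoped Topology ENNReal NNReal BigOperators

noncomputable section

/-! ## Common definitions for the random block matrix model -/

/-- The Euclidean (ℓ²) norm of a complex vector. -/
def vecNorm {ι : Type*} [Fintype ι] (x : ι → ℂ) : ℝ :=
  Real.sqrt (∑ i, ‖x i‖ ^ 2)

/-- The Hilbert–Schmidt (Frobenius) norm of a complex matrix. -/
def hsNorm {ι κ : Type*} [Fintype ι] [Fintype κ] (B : Matrix ι κ ℂ) : ℝ :=
  Real.sqrt (∑ i, ∑ j, ‖B i j‖ ^ 2)

/-- The ℓ² → ℓ² operator norm of a complex matrix. -/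
def opNorm {ι κ : Type*} [Fintype ι] [Fintype κ] (B : Matrix ι κ ℂ) : ℝ :=
  ⨆ x : { x : κ → ℂ // vecNorm x ≤ 1 }, vecNorm (B.mulVec x.1)

/-- Entrywise ℓ² norm of a 3-tensor. -/
def l2norm3 {ι : Type*} [Fintype ι] (T : ι → ι → ι → ℂ) : ℝ :=
  Real.sqrt (∑ a, ∑ b, ∑ c, ‖T a b c‖ ^ 2)

/-- The normalized trace `⟨B⟩ = (card ι)⁻¹ Tr B`. -/
def ntrace {ι : Type*} [Fintype ι] (B : Matrix ι ι ℂ) : ℂ :=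
  (Fintype.card ι : ℂ)⁻¹ * B.trace

/-- The "imaginary part" `(B - B*) / (2i)` of a square complex matrix. -/
def matIm {ι : Type*} (B : Matrix ι ι ℂ) : Matrix ι ι ℂ :=
  (2 * Complex.I)⁻¹ • (B - Bᴴ)

/-- The `DN × DN` block-diagonal matrix with diagonal blocks `Hs 0, …, Hs (D-1)`. -/
def blockDiagOf (D N : ℕ) (Hs : Fin D → Matrix (Fin N) (Fin N) ℂ) :
    Matrix (Fin D × Fin N) (Fin D × Fin N) ℂ :=
  Matrix.of fun p q => if p.1 = q.1 then Hs p.1 p.2 q.2 else 0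

/-- The `DN × DN` Hermitian block matrix `Λ` coupling cyclically adjacent blocks by `A` and `A*`
(for `D = 2` the off-diagonal blocks are `A` and `A*`). -/
def coupling (D N : ℕ) (A : Matrix (Fin N) (Fin N) ℂ) :
    Matrix (Fin D × Fin N) (Fin D × Fin N) ℂ :=
  Matrix.of fun p q =>
    if (q.1 : ℕ) = (p.1 : ℕ) + 1 then A p.2 q.2
    else if (p.1 : ℕ) = (q.1 : ℕ) + 1 then Aᴴ p.2 q.2
    else if (p.1 : ℕ) = 0 ∧ (q.1 : ℕ) = D - 1 ∧ 2 < D then Aᴴ p.2 q.2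
    else if (q.1 : ℕ) = 0 ∧ (p.1 : ℕ) = D - 1 ∧ 2 < D then A p.2 q.2
    else 0

/-- The diagonal projection `E_a` onto the `a`-th block. -/
def blockProj (D N : ℕ) (a : Fin D) : Matrix (Fin D × Fin N) (Fin D × Fin N) ℂ :=
  Matrix.of fun p q => if p = q ∧ p.1 = a then 1 else 0

/-- `𝔯(k) = min (k, DN + 1 - k)`. -/
def frk (D N k : ℕ) : ℕ := min k (D * N + 1 - k)

/-- Index set for the independent entries (on or above the diagonal) of the `D` Wigner blocks. -/
abbrev WignerIndex (D N : ℕ) := Fin D × { p : Fin N × Fin N // (p.1 : ℕ) ≤ (p.2 : ℕ) }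

/-- The random block matrix model: for each `N`, `D` independent `N × N` complex Hermitian
Wigner matrices (entries independent up to Hermitian symmetry, i.i.d. real diagonal entries,
i.i.d. complex off-diagonal entries, mean zero, variance `1/N`, vanishing second moment
off the diagonal, `p`-th moments bounded by `C p * N^(-p/2)`), together with a deterministic
`N × N` coupling matrix `A` of operator norm at most `N^(-δA)`. -/
structure BlockModel (D : ℕ) (δA : ℝ) (C : ℕ → ℝ) where
  Ω : ℕ → Type
  [instMeas : ∀ N, MeasurableSpace (Ω N)]
  μ : ∀ N, MeasureTheory.Measure (Ω N)
  isProb : ∀ N, MeasureTheory.IsProbabilityMeasure (μ N)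
  A : ∀ N : ℕ, Matrix (Fin N) (Fin N) ℂ
  H : ∀ N : ℕ, Fin D → Ω N → Matrix (Fin N) (Fin N) ℂ
  meas_H : ∀ (N : ℕ) (a : Fin D) (i j : Fin N), Measurable fun ω => H N a ω i j
  herm : ∀ N a ω, (H N a ω).IsHermitian
  diag_real : ∀ N a ω i, (H N a ω i i).im = 0
  indep : ∀ N, ProbabilityTheory.iIndepFun
      (fun (idx : WignerIndex D N) ω => H N idx.1 ω idx.2.1.1 idx.2.1.2) (μ N)
  identDiag : ∀ (N : ℕ) (a b : Fin D) (i j : Fin N),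
      ProbabilityTheory.IdentDistrib (fun ω => H N a ω i i) (fun ω => H N b ω j j) (μ N) (μ N)
  identOff : ∀ (N : ℕ) (a b : Fin D) (i j i' j' : Fin N), (i : ℕ) < (j : ℕ) → (i' : ℕ) < (j' : ℕ) →
      ProbabilityTheory.IdentDistrib (fun ω => H N a ω i j) (fun ω => H N b ω i' j') (μ N) (μ N)
  mean_zero : ∀ (N : ℕ) (a : Fin D) (i j : Fin N), ∫ ω, H N a ω i j ∂(μ N) = 0
  var_entry : ∀ (N : ℕ), 0 < N → ∀ (a : Fin D) (i j : Fin N),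
      ∫ ω, ‖H N a ω i j‖ ^ 2 ∂(μ N) = 1 / (N : ℝ)
  offdiag_sq : ∀ (N : ℕ) (a : Fin D) (i j : Fin N), i ≠ j →
      ∫ ω, (H N a ω i j) ^ 2 ∂(μ N) = 0
  moment_bound : ∀ (p N : ℕ), 0 < N → ∀ (a : Fin D) (i j : Fin N),
      ∫ ω, ‖H N a ω i j‖ ^ p ∂(μ N) ≤ C p * (N : ℝ) ^ (-(p : ℝ) / 2)
  opA_bound : ∀ (N : ℕ), 0 < N → ∀ x : Fin N → ℂ,
      vecNorm ((A N).mulVec x) ≤ (N : ℝ) ^ (-δA) * vecNorm x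

attribute [instance] BlockModel.instMeas

namespace BlockModel

variable {D : ℕ} {δA : ℝ} {C : ℕ → ℝ}

/-- The uncoupled block-diagonal matrix `H`. -/
def Hbig (M : BlockModel D δA C) (N : ℕ) (ω : M.Ω N) :
    Matrix (Fin D × Fin N) (Fin D × Fin N) ℂ :=
  blockDiagOf D N fun a => M.H N a ω

/-- The coupling matrix `Λ`. -/
def Lam (M : BlockModel D δA C) (N : ℕ) : Matrix (Fin D × Fin N) (Fin D × Fin N) ℂ :=
  coupling D N (M.A N)

/-- The coupled matrix `H_Λ = H + Λ`. -/
def HLam (M : BlockModel D δA C) (N : ℕ) (ω : M.Ω N) :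
    Matrix (Fin D × Fin N) (Fin D × Fin N) ℂ :=
  M.Hbig N ω + M.Lam N

end BlockModel

/-- `ev 1 ≥ ev 2 ≥ ⋯ ≥ ev n` together with `v 1, …, v n` is a (complete, orthonormal,
decreasingly ordered) eigensystem of the Hermitian matrix `B`. -/
structure IsEigenSystem {ι : Type*} [Fintype ι] (B : Matrix ι ι ℂ) (n : ℕ)
    (ev : ℕ → ℝ) (v : ℕ → ι → ℂ) : Prop where
  antitone : ∀ k l, 1 ≤ k → k ≤ l → l ≤ n → ev l ≤ ev k
  eigen : ∀ k, 1 ≤ k → k ≤ n → B.mulVec (v k) = (ev k : ℂ) • v k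
  orthonormal : ∀ k l, 1 ≤ k → k ≤ n → 1 ≤ l → l ≤ n →
      star (v k) ⬝ᵥ v l = if k = l then 1 else 0

/-- `m` is the self-consistent Stieltjes transform associated with the deterministic matrix `L`:
the unique solution of `m(z) = ⟨(L - z - m(z))⁻¹⟩` with `Im m(z) > 0` on the upper half plane,
extended by conjugation symmetry. -/
structure IsSelfConsistent {ι : Type*} [Fintype ι] [DecidableEq ι]
    (L : Matrix ι ι ℂ) (m : ℂ → ℂ) : Prop where
  im_pos : ∀ z : ℂ, 0 < z.im → 0 < (m z).im
  eqn : ∀ z : ℂ, 0 < z.im →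
      m z = ntrace (L - z • (1 : Matrix ι ι ℂ) - m z • (1 : Matrix ι ι ℂ))⁻¹
  conj_symm : ∀ z : ℂ, m ((starRingEnd ℂ) z) = (starRingEnd ℂ) (m z)

/-- The deterministic approximation `M(z) = (L - z - m(z))⁻¹` of the resolv. -/
def Mdet {ι : Type*} [Fintype ι] [DecidableEq ι] (L : Matrix ι ι ℂ) (m : ℂ → ℂ) (z : ℂ) :
    Matrix ι ι ℂ :=
  (L - z • (1 : Matrix ι ι ℂ) - m z • (1 : Matrix ι ι ℂ))⁻¹

/-- The resolv `G(z) = (B - z)⁻¹`. -/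
def resolv {ι : Type*} [Fintype ι] [DecidableEq ι] (B : Matrix ι ι ℂ) (z : ℂ) :
    Matrix ι ι ℂ :=
  (B - z • (1 : Matrix ι ι ℂ))⁻¹

/-- `ρ` is the boundary density `ρ(x) = π⁻¹ lim_{η ↓ 0} Im m(x + iη)` of `m`. -/
def IsDensityOf (m : ℂ → ℂ) (ρ : ℝ → ℝ) : Prop :=
  ∀ x : ℝ, Tendsto (fun η : ℝ => (m ((x : ℂ) + (η : ℂ) * Complex.I)).im / Real.pi)
    (𝓝[>] 0) (𝓝 (ρ x))

/-- The `k`-th quantile `γ_k = sup {x : ∫_x^∞ ρ ≥ (k - 1/2) / total}`. -/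
def quantile (ρ : ℝ → ℝ) (total k : ℕ) : ℝ :=
  sSup {x : ℝ | ((k : ℝ) - 1 / 2) / (total : ℝ) ≤ ∫ E in Set.Ici x, ρ E}

/-- The semicircle density `ρ_sc(x) = (2π)⁻¹ √(4 - x²) 1_{[-2,2]}(x)`. -/
def semicircleDensity (x : ℝ) : ℝ :=
  Real.sqrt (4 - x ^ 2) / (2 * Real.pi)

/-- `M̂(z₁,z₂)_{ab} = D ⟨M(z₁) E_a M(z₂) E_b⟩`. -/
def Mhat (D N : ℕ) (L : Matrix (Fin D × Fin N) (Fin D × Fin N) ℂ) (m : ℂ → ℂ) (z₁ z₂ : ℂ) :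
    Matrix (Fin D) (Fin D) ℂ :=
  Matrix.of fun a b =>
    (D : ℂ) * ntrace (Mdet L m z₁ * blockProj D N a * Mdet L m z₂ * blockProj D N b)

/-- `L(z₁,z₂)_{ab} = D ⟨G(z₁) E_a G(z₂) E_b⟩`. -/
def Lmat (D N : ℕ) (B : Matrix (Fin D × Fin N) (Fin D × Fin N) ℂ) (z₁ z₂ : ℂ) :
    Matrix (Fin D) (Fin D) ℂ :=
  Matrix.of fun a b =>
    (D : ℂ) * ntrace (resolv B z₁ * blockProj D N a * resolv B z₂ * blockProj D N b)

/-- `K(z₁,z₂) = (1 - M̂(z₁,z₂))⁻¹ M̂(z₁,z₂)`. -/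
def Kmat (D N : ℕ) (L : Matrix (Fin D × Fin N) (Fin D × Fin N) ℂ) (m : ℂ → ℂ) (z₁ z₂ : ℂ) :
    Matrix (Fin D) (Fin D) ℂ :=
  (1 - Mhat D N L m z₁ z₂)⁻¹ * Mhat D N L m z₁ z₂

/-- `L(z₁,z₂,z₃)_{a₁a₂a₃} = D ⟨G(z₁) E_{a₁} G(z₂) E_{a₂} G(z₃) E_{a₃}⟩`. -/
def Lmat3 (D N : ℕ) (B : Matrix (Fin D × Fin N) (Fin D × Fin N) ℂ) (z₁ z₂ z₃ : ℂ) :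
    Fin D → Fin D → Fin D → ℂ :=
  fun a b c => (D : ℂ) * ntrace (resolv B z₁ * blockProj D N a * resolv B z₂ *
    blockProj D N b * resolv B z₃ * blockProj D N c)

/-- The three-resolv deterministic tensor `K(z₁,z₂,z₃)`. -/
def Kmat3 (D N : ℕ) (L : Matrix (Fin D × Fin N) (Fin D × Fin N) ℂ) (m : ℂ → ℂ) (z₁ z₂ z₃ : ℂ) :
    Fin D → Fin D → Fin D → ℂ :=
  fun a b c => ∑ b₁, ∑ b₂, ∑ b₃,
    (1 - Mhat D N L m z₁ z₂)⁻¹ a b₁ * (1 - Mhat D N L m z₂ z₃)⁻¹ b b₂ *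
      (1 - Mhat D N L m z₃ z₁)⁻¹ c b₃ *
      ((D : ℂ) * ntrace (Mdet L m z₁ * blockProj D N b₁ * Mdet L m z₂ * blockProj D N b₂ *
        Mdet L m z₃ * blockProj D N b₃))
/-! ## Auxiliary lemmas for the stability operator norm -/

namespace StabAux

open Complex

section Dot

variable {ι : Type*} [Fintype ι] [DecidableEq ι]

lemma dot_self_eq (v : ι → ℂ) :
    star v ⬝ᵥ v = ((∑ i, Complex.normSq (v i) : ℝ) : ℂ) := by
  rw [Complex.ofReal_sum]
  simp only [dotProduct, Pi.star_apply]
  refine Finset.sum_congr rfl fun i _ => ?_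
  rw [Complex.star_def, mul_comm, Complex.mul_conj]

lemma dot_self_pos {v : ι → ℂ} (hv : v ≠ 0) :
    0 < (∑ i, Complex.normSq (v i)) := by
  obtain ⟨i, hi⟩ := Function.ne_iff.mp hv
  exact Finset.sum_pos' (fun j _ => Complex.normSq_nonneg _)
    ⟨i, Finset.mem_univ i, Complex.normSq_pos.mpr hi⟩

lemma det_sub_smul_ne_zero {B : Matrix ι ι ℂ} {c : ℂ}
    (h : ∀ v : ι → ℂ, B *ᵥ v = c • v → v = 0) : (B - c • 1).det ≠ 0 := by
  intro hdet
  obtain ⟨v, hv0, hv⟩ := Matrix.exists_mulVec_eq_zero_iff.mpr hdet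
  refine hv0 (h v ?_)
  have h2 : (B - c • 1) *ᵥ v = B *ᵥ v - c • v := by
    rw [Matrix.sub_mulVec, Matrix.smul_mulVec, Matrix.one_mulVec]
  rw [h2] at hv
  exact sub_eq_zero.mp hv

lemma quad_conj_eq {B : Matrix ι ι ℂ} (hB : Bᴴ = B) (v : ι → ℂ) :
    star (star v ⬝ᵥ B *ᵥ v) = star v ⬝ᵥ B *ᵥ v := by
  rw [← Matrix.star_dotProduct, Matrix.star_mulVec, hB, ← Matrix.dotProduct_mulVec]

lemma herm_det_ne {B : Matrix ι ι ℂ} (hB : Bᴴ = B) {c : ℂ} (hc : c.im ≠ 0) :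
    (B - c • 1).det ≠ 0 := by
  apply det_sub_smul_ne_zero
  intro v hv
  by_contra hv0
  have hq : (star v ⬝ᵥ B *ᵥ v).im = 0 := by
    have := quad_conj_eq hB v
    have h2 : (starRingEnd ℂ) (star v ⬝ᵥ B *ᵥ v) = star v ⬝ᵥ B *ᵥ v := this
    exact Complex.conj_eq_iff_im.mp h2
  rw [hv, dotProduct_smul, dot_self_eq] at hq
  have hs := dot_self_pos hv0
  rw [smul_eq_mul, Complex.mul_im, Complex.ofReal_re, Complex.ofReal_im] at hq
  simp only [mul_zero, zero_add] at hq
  rcases mul_eq_zero.mp hq with h | h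
  · exact hc h
  · linarith

lemma gram_det_ne (A : Matrix ι ι ℂ) {c : ℂ} (hc : c.im ≠ 0 ∨ c.re < 0) :
    (A * Aᴴ - c • 1).det ≠ 0 := by
  apply det_sub_smul_ne_zero
  intro v hv
  by_contra hv0
  have h1 : star v ⬝ᵥ (A * Aᴴ) *ᵥ v
      = ((∑ i, Complex.normSq ((Aᴴ *ᵥ v) i) : ℝ) : ℂ) := by
    have hsv : star v ᵥ* A = star (Aᴴ *ᵥ v) := by
      rw [Matrix.star_mulVec, Matrix.conjTranspose_conjTranspose]
    rw [← Matrix.mulVec_mulVec, Matrix.dotProduct_mulVec, hsv]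
    exact dot_self_eq _
  rw [hv, dotProduct_smul, dot_self_eq, smul_eq_mul] at h1
  have hs := dot_self_pos hv0
  have hr : 0 ≤ (∑ i, Complex.normSq ((Aᴴ *ᵥ v) i)) :=
    Finset.sum_nonneg fun i _ => Complex.normSq_nonneg _
  have him := congrArg Complex.im h1
  have hre := congrArg Complex.re h1
  rw [Complex.mul_im, Complex.ofReal_re, Complex.ofReal_im, Complex.ofReal_im] at him
  rw [Complex.mul_re, Complex.ofReal_re, Complex.ofReal_im, Complex.ofReal_re] at hre
  simp only [mul_zero, zero_add, add_zero, zero_mul, sub_zero] at him hre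
  have hcim : c.im = 0 := by
    rcases mul_eq_zero.mp him with h | h
    · exact h
    · linarith
  rcases hc with h | h
  · exact h hcim
  · nlinarith

end Dot

section VecNorm

variable {ι : Type*} [Fintype ι]

lemma vecNorm_eq (x : ι → ℂ) : vecNorm x = ‖(WithLp.equiv 2 (ι → ℂ)).symm x‖ := by
  rw [vecNorm, EuclideanSpace.norm_eq]
  congr 1

lemma vecNorm_nonneg (x : ι → ℂ) : 0 ≤ vecNorm x := Real.sqrt_nonneg _

lemma vecNorm_add_le (x y : ι → ℂ) : vecNorm (x + y) ≤ vecNorm x + vecNorm y := by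
  rw [vecNorm_eq, vecNorm_eq, vecNorm_eq]
  exact norm_add_le ((WithLp.equiv 2 (ι → ℂ)).symm x) ((WithLp.equiv 2 (ι → ℂ)).symm y)

end VecNorm

section Blocks

lemma blockProj_eq (D N : ℕ) (a : Fin D) :
    blockProj D N a = Matrix.diagonal (fun p => if p.1 = a then (1 : ℂ) else 0) := by
  ext p q
  simp only [blockProj, Matrix.of_apply, Matrix.diagonal_apply]
  by_cases h : p = q
  · subst h; simp
  · simp [h]

lemma trace_proj_proj {D N : ℕ} (X Y : Matrix (Fin D × Fin N) (Fin D × Fin N) ℂ)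
    (a b : Fin D) :
    (X * blockProj D N a * Y * blockProj D N b).trace
      = ∑ p, ∑ q, (if q.1 = a then (1 : ℂ) else 0) * (X p q * Y q p)
          * (if p.1 = b then (1 : ℂ) else 0) := by
  rw [blockProj_eq, blockProj_eq]
  simp only [Matrix.trace, Matrix.diag_apply, Matrix.mul_diagonal]
  refine Finset.sum_congr rfl fun p _ => ?_
  rw [Matrix.mul_apply, Finset.sum_mul]
  refine Finset.sum_congr rfl fun q _ => ?_
  rw [Matrix.mul_diagonal]
  ring

lemma sum_block {D N : ℕ} (f : Fin D × Fin N → ℂ) (a : Fin D) :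
    (∑ q : Fin D × Fin N, if q.1 = a then f q else 0) = ∑ i, f (a, i) := by
  rw [Fintype.sum_prod_type]
  rw [Finset.sum_eq_single a]
  · simp
  · intro c _ hc
    simp [hc]
  · intro h; exact absurd (Finset.mem_univ a) h

lemma coupling_herm (D N : ℕ) (A : Matrix (Fin N) (Fin N) ℂ) :
    (coupling D N A)ᴴ = coupling D N A := by
  ext ⟨a, i⟩ ⟨b, j⟩
  simp only [Matrix.conjTranspose_apply, coupling, Matrix.of_apply]
  have ha := a.isLt
  have hb := b.isLt
  split_ifs <;>
    first
      | (exfalso; omega)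
      | simp [Matrix.conjTranspose_apply, star_star]

end Blocks

end StabAux
namespace StabAux

lemma fin_val_succ {n : ℕ} (a : Fin (n + 1)) :
    ((a + 1 : Fin (n + 1)) : ℕ) = (a : ℕ) + 1 ∧ (a : ℕ) < n
      ∨ ((a : ℕ) = n ∧ ((a + 1 : Fin (n + 1)) : ℕ) = 0) := by
  rcases eq_or_ne a (Fin.last n) with h | h
  · right
    subst h
    simp [Fin.last_add_one]
  · left
    refine ⟨?_, Fin.val_lt_last h⟩
    rw [Fin.val_add_one]
    simp [h]

lemma coupling_shift {D' N : ℕ} (hD : 2 < D' + 1) (A : Matrix (Fin N) (Fin N) ℂ)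
    (p q : Fin (D' + 1) × Fin N) :
    coupling (D' + 1) N A (p.1 + 1, p.2) (q.1 + 1, q.2) = coupling (D' + 1) N A p q := by
  obtain ⟨a, i⟩ := p
  obtain ⟨b, j⟩ := q
  simp only [coupling, Matrix.of_apply]
  have ha := a.isLt
  have hb := b.isLt
  rcases fin_val_succ a with ⟨ha1, ha2⟩ | ⟨ha2, ha1⟩ <;>
    rcases fin_val_succ b with ⟨hb1, hb2⟩ | ⟨hb2, hb1⟩ <;>
      (split_ifs <;> first | rfl | (exfalso; omega))

/-- The reindexing `Fin 2 × Fin N ≃ Fin N ⊕ Fin N`. -/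
def swapEquiv (N : ℕ) : (Fin (1 + 1) × Fin N) ≃ (Fin N ⊕ Fin N) where
  toFun p := if p.1 = 0 then Sum.inl p.2 else Sum.inr p.2
  invFun := Sum.elim (fun i => (0, i)) (fun i => (1, i))
  left_inv := by
    rintro ⟨c, i⟩
    fin_cases c <;> simp
  right_inv := by
    rintro (i | i) <;> simp

lemma swapEquiv_left {N : ℕ} (i : Fin N) :
    swapEquiv N ((0 : Fin (1 + 1)), i) = Sum.inl i := rfl

lemma swapEquiv_right {N : ℕ} (i : Fin N) :
    swapEquiv N ((1 : Fin (1 + 1)), i) = Sum.inr i := by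
  simp [swapEquiv]

open Fin.NatCast in
lemma block_trace_eq {D N : ℕ} (hD : 2 ≤ D) (A : Matrix (Fin N) (Fin N) ℂ)
    {w : ℂ} (hw : w.im ≠ 0) (a b : Fin D) :
    ∑ i : Fin N, (coupling D N A - w • 1)⁻¹ (a, i) (a, i)
      = ∑ i : Fin N, (coupling D N A - w • 1)⁻¹ (b, i) (b, i) := by
  obtain ⟨D', rfl⟩ : ∃ D', D = D' + 1 := ⟨D - 1, by omega⟩
  set M := (coupling (D' + 1) N A - w • 1)⁻¹ with hM
  rcases lt_or_ge 2 (D' + 1) with hD3 | hD2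
  · -- case D ≥ 3: cyclic shift invariance
    set e : (Fin (D' + 1) × Fin N) ≃ (Fin (D' + 1) × Fin N) :=
      Equiv.prodCongr (Equiv.addRight (1 : Fin (D' + 1))) (Equiv.refl (Fin N)) with he
    have heapp : ∀ p : Fin (D' + 1) × Fin N, e p = (p.1 + 1, p.2) := by
      rintro ⟨c, i⟩; rfl
    have hL : (coupling (D' + 1) N A - w • 1).submatrix e e
        = coupling (D' + 1) N A - w • 1 := by
      ext p q
      rw [Matrix.submatrix_apply]
      simp only [Matrix.sub_apply, Matrix.smul_apply, Matrix.one_apply, smul_eq_mul, heapp]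
      have h1 : ((p.1 + 1, p.2) = ((q.1 + 1, q.2) : Fin (D' + 1) × Fin N)) ↔ p = q := by
        simp [Prod.ext_iff]
      rw [coupling_shift hD3 A p q]
      simp only [h1]
    have hMe : M.submatrix e e = M := by
      rw [hM, ← Matrix.inv_submatrix_equiv (coupling (D' + 1) N A - w • 1) e e, hL]
    have hstep : ∀ c : Fin (D' + 1),
        (∑ i, M (c + 1, i) (c + 1, i)) = ∑ i, M (c, i) (c, i) := by
      intro c
      refine Finset.sum_congr rfl fun i _ => ?_
      have h2 := congrArg (fun X => X (c, i) (c, i)) hMe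
      simp only [Matrix.submatrix_apply, heapp] at h2
      exact h2
    have hiter : ∀ (k : ℕ) (c : Fin (D' + 1)),
        (∑ i, M (c + (k : Fin (D' + 1)), i) (c + (k : Fin (D' + 1)), i))
          = ∑ i, M (c, i) (c, i) := by
      intro k
      induction k with
      | zero => intro c; simp
      | succ k ih =>
          intro c
          have hc : ((k + 1 : ℕ) : Fin (D' + 1)) = (k : Fin (D' + 1)) + 1 := by
            push_cast; ring
          rw [hc, ← add_assoc, hstep (c + (k : Fin (D' + 1)))]
          exact ih c
    have h3 : a + (((b - a : Fin (D' + 1)) : ℕ) : Fin (D' + 1)) = b := by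
      rw [Fin.cast_val_eq_self]
      abel
    rw [← h3]
    exact (hiter _ a).symm
  · -- case D = 2
    have hD1 : D' = 1 := by omega
    subst hD1
    set c2 : ℂ := w ^ 2 with hc2def
    have hwne : w ≠ 0 := fun h => hw (by simp [h])
    have hc2 : c2.im ≠ 0 ∨ c2.re < 0 := by
      rcases eq_or_ne w.re 0 with h | h
      · right
        rw [hc2def, sq, Complex.mul_re, h]
        have h2 : 0 < w.im * w.im := mul_self_pos.mpr hw
        linarith
      · left
        rw [hc2def, sq, Complex.mul_im]
        intro hcon
        rcases mul_eq_zero.mp (by linear_combination hcon / 2 : w.re * w.im = 0) with h' | h'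
        · exact h h'
        · exact hw h'
    have hdP : (A * Aᴴ - c2 • 1).det ≠ 0 := gram_det_ne A hc2
    have hdQ : (Aᴴ * A - c2 • 1).det ≠ 0 := by
      have := gram_det_ne Aᴴ hc2
      rwa [Matrix.conjTranspose_conjTranspose] at this
    set P := (A * Aᴴ - c2 • 1)⁻¹ with hPdef
    set Q := (Aᴴ * A - c2 • 1)⁻¹ with hQdef
    have hP1 : (A * Aᴴ - c2 • 1) * P = 1 :=
      Matrix.mul_nonsing_inv _ (isUnit_iff_ne_zero.mpr hdP)
    have hP2 : P * (A * Aᴴ - c2 • 1) = 1 :=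
      Matrix.nonsing_inv_mul _ (isUnit_iff_ne_zero.mpr hdP)
    have hQ1 : (Aᴴ * A - c2 • 1) * Q = 1 :=
      Matrix.mul_nonsing_inv _ (isUnit_iff_ne_zero.mpr hdQ)
    have h0 : (A * Aᴴ - c2 • 1) * A = A * (Aᴴ * A - c2 • 1) := by
      rw [Matrix.sub_mul, Matrix.mul_sub, Matrix.mul_assoc, Matrix.smul_mul,
        Matrix.mul_smul, Matrix.one_mul, Matrix.mul_one]
    have hAQ : A * Q = P * A := by
      calc A * Q = (P * (A * Aᴴ - c2 • 1)) * (A * Q) := by rw [hP2, Matrix.one_mul]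
        _ = P * ((A * Aᴴ - c2 • 1) * A * Q) := by
            rw [Matrix.mul_assoc, Matrix.mul_assoc]
        _ = P * (A * (Aᴴ * A - c2 • 1) * Q) := by rw [h0]
        _ = P * (A * ((Aᴴ * A - c2 • 1) * Q)) := by rw [Matrix.mul_assoc A]
        _ = P * A := by rw [hQ1, Matrix.mul_one]
    have hFB : coupling (1 + 1) N A - w • 1
        = (Matrix.fromBlocks (-w • 1) A Aᴴ (-w • 1)).submatrix (swapEquiv N) (swapEquiv N) := by
      ext ⟨c, i⟩ ⟨d, j⟩
      rw [Matrix.submatrix_apply]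
      fin_cases c <;> fin_cases d <;>
        simp [coupling, swapEquiv, Matrix.one_apply, Prod.ext_iff,
          Matrix.smul_apply, smul_eq_mul]
    have hb11 : (-w • 1 : Matrix (Fin N) (Fin N) ℂ) * (w • P) + A * (Aᴴ * P) = 1 := by
      have e1 : (-w • 1 : Matrix (Fin N) (Fin N) ℂ) * (w • P) = -(c2 • P) := by
        rw [Matrix.smul_mul, Matrix.one_mul, smul_smul, hc2def, sq, neg_mul, neg_smul]
      have e2 : A * Aᴴ * P - c2 • P = 1 := by
        calc A * Aᴴ * P - c2 • P = (A * Aᴴ - c2 • 1) * P := by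
              rw [Matrix.sub_mul, Matrix.smul_mul, Matrix.one_mul]
          _ = 1 := hP1
      rw [e1, ← Matrix.mul_assoc, neg_add_eq_sub]
      exact e2
    have hb12 : (-w • 1 : Matrix (Fin N) (Fin N) ℂ) * (A * Q) + A * (w • Q) = 0 := by
      rw [Matrix.smul_mul, Matrix.one_mul, Matrix.mul_smul, neg_smul, neg_add_cancel]
    have hb21 : Aᴴ * (w • P) + (-w • 1 : Matrix (Fin N) (Fin N) ℂ) * (Aᴴ * P) = 0 := by
      rw [Matrix.mul_smul, Matrix.smul_mul, Matrix.one_mul, neg_smul, add_neg_cancel]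
    have hb22 : Aᴴ * (A * Q) + (-w • 1 : Matrix (Fin N) (Fin N) ℂ) * (w • Q) = 1 := by
      have e1 : (-w • 1 : Matrix (Fin N) (Fin N) ℂ) * (w • Q) = -(c2 • Q) := by
        rw [Matrix.smul_mul, Matrix.one_mul, smul_smul, hc2def, sq, neg_mul, neg_smul]
      have e2 : Aᴴ * A * Q - c2 • Q = 1 := by
        calc Aᴴ * A * Q - c2 • Q = (Aᴴ * A - c2 • 1) * Q := by
              rw [Matrix.sub_mul, Matrix.smul_mul, Matrix.one_mul]
          _ = 1 := hQ1
      rw [e1, ← Matrix.mul_assoc, ← sub_eq_add_neg]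
      exact e2
    have hFBmul : Matrix.fromBlocks (-w • 1) A Aᴴ (-w • 1)
        * Matrix.fromBlocks (w • P) (A * Q) (Aᴴ * P) (w • Q) = 1 := by
      rw [Matrix.fromBlocks_multiply, hb11, hb12, hb21, hb22, Matrix.fromBlocks_one]
    have hMeq : M = (Matrix.fromBlocks (w • P) (A * Q) (Aᴴ * P) (w • Q)).submatrix
        (swapEquiv N) (swapEquiv N) := by
      have hinv : (Matrix.fromBlocks (-w • 1) A Aᴴ (-w • 1))⁻¹
          = Matrix.fromBlocks (w • P) (A * Q) (Aᴴ * P) (w • Q) :=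
        Matrix.inv_eq_right_inv hFBmul
      rw [hM, hFB, Matrix.inv_submatrix_equiv, hinv]
    have hg0 : (∑ i, M ((0 : Fin (1 + 1)), i) (0, i)) = w * P.trace := by
      calc (∑ i, M ((0 : Fin (1 + 1)), i) (0, i)) = ∑ i, (w • P) i i := by
            refine Finset.sum_congr rfl fun i _ => ?_
            rw [hMeq, Matrix.submatrix_apply, swapEquiv_left]
            simp
        _ = w * P.trace := by
            simp [Matrix.trace, Matrix.diag_apply, Matrix.smul_apply, smul_eq_mul,
              Finset.mul_sum]
    have hg1 : (∑ i, M ((1 : Fin (1 + 1)), i) (1, i)) = w * Q.trace := by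
      calc (∑ i, M ((1 : Fin (1 + 1)), i) (1, i)) = ∑ i, (w • Q) i i := by
            refine Finset.sum_congr rfl fun i _ => ?_
            rw [hMeq, Matrix.submatrix_apply, swapEquiv_right]
            simp
        _ = w * Q.trace := by
            simp [Matrix.trace, Matrix.diag_apply, Matrix.smul_apply, smul_eq_mul,
              Finset.mul_sum]
    have htrP : (A * Aᴴ * P).trace = N + c2 * P.trace := by
      have e3 : A * Aᴴ * P = 1 + c2 • P := by
        have h := hP1
        rw [Matrix.sub_mul, Matrix.smul_mul, Matrix.one_mul, sub_eq_iff_eq_add] at h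
        rw [h, add_comm]
      rw [e3, Matrix.trace_add, Matrix.trace_smul, Matrix.trace_one]
      simp [smul_eq_mul]
    have htrQ : (Aᴴ * A * Q).trace = N + c2 * Q.trace := by
      have e3 : Aᴴ * A * Q = 1 + c2 • Q := by
        have h := hQ1
        rw [Matrix.sub_mul, Matrix.smul_mul, Matrix.one_mul, sub_eq_iff_eq_add] at h
        rw [h, add_comm]
      rw [e3, Matrix.trace_add, Matrix.trace_smul, Matrix.trace_one]
      simp [smul_eq_mul]
    have htr3 : (A * Aᴴ * P).trace = (Aᴴ * A * Q).trace := by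
      calc (A * Aᴴ * P).trace = (A * (Aᴴ * P)).trace := by rw [Matrix.mul_assoc]
        _ = ((Aᴴ * P) * A).trace := Matrix.trace_mul_comm _ _
        _ = (Aᴴ * (P * A)).trace := by rw [Matrix.mul_assoc]
        _ = (Aᴴ * (A * Q)).trace := by rw [← hAQ]
        _ = (Aᴴ * A * Q).trace := by rw [Matrix.mul_assoc]
    have hc2ne : c2 ≠ 0 := pow_ne_zero 2 hwne
    have hPQ : P.trace = Q.trace := by
      have h5 : (N : ℂ) + c2 * P.trace = (N : ℂ) + c2 * Q.trace := by
        rw [← htrP, htr3, htrQ]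
      exact mul_left_cancel₀ hc2ne (add_left_cancel h5)
    have h01 : (∑ i, M ((0 : Fin (1 + 1)), i) (0, i))
        = ∑ i, M ((1 : Fin (1 + 1)), i) (1, i) := by
      rw [hg0, hg1, hPQ]
    fin_cases a <;> fin_cases b
    · rfl
    · exact h01
    · exact h01.symm
    · rfl

end StabAux
namespace StabAux

lemma spectrum_exists_eigenvector {k : ℕ} (B : Matrix (Fin k) (Fin k) ℂ) {μ : ℂ}
    (h : μ ∈ spectrum ℂ B) : ∃ v, v ≠ 0 ∧ B *ᵥ v = μ • v := by
  have h' : μ ∈ spectrum ℂ (Matrix.toLinAlgEquiv' B) := by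
    rwa [AlgEquiv.spectrum_eq]
  have he : Module.End.HasEigenvalue
      (Matrix.toLinAlgEquiv' B : Module.End ℂ (Fin k → ℂ)) μ :=
    Module.End.hasEigenvalue_iff_mem_spectrum.mpr h'
  obtain ⟨v, hv⟩ := he.exists_hasEigenvector
  refine ⟨v, hv.2, ?_⟩
  have h2 := hv.apply_eq_smul
  rwa [Matrix.toLinAlgEquiv'_apply] at h2

lemma eig_bound {D : ℕ} (Mh : Matrix (Fin D) (Fin D) ℂ) (lam : ℝ)
    (hnorm : ∀ a b, ‖Mh a b‖ = (Mh a b).re)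
    (hrow : ∀ a, (∑ b, (Mh a b).re) = lam)
    {μ : ℂ} {v : Fin D → ℂ} (hv : v ≠ 0) (heig : Mh *ᵥ v = μ • v) : ‖μ‖ ≤ lam := by
  obtain ⟨i0, hi0⟩ : ∃ i, v i ≠ 0 := Function.ne_iff.mp hv
  obtain ⟨a0, -, ha0⟩ := Finset.exists_max_image Finset.univ (fun a => ‖v a‖)
    ⟨i0, Finset.mem_univ _⟩
  have hpos : 0 < ‖v a0‖ :=
    lt_of_lt_of_le (norm_pos_iff.mpr hi0) (ha0 i0 (Finset.mem_univ _))
  have h1 : μ * v a0 = ∑ b, Mh a0 b * v b := by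
    have h2 := congrFun heig a0
    simp only [Matrix.mulVec, dotProduct, Pi.smul_apply, smul_eq_mul] at h2
    exact h2.symm
  have h2 : ‖μ‖ * ‖v a0‖ ≤ lam * ‖v a0‖ := by
    calc ‖μ‖ * ‖v a0‖ = ‖μ * v a0‖ := (norm_mul _ _).symm
      _ ≤ ∑ b, ‖Mh a0 b * v b‖ := h1 ▸ norm_sum_le _ _
      _ = ∑ b, (Mh a0 b).re * ‖v b‖ := by
          refine Finset.sum_congr rfl fun b _ => ?_
          rw [norm_mul, hnorm]
      _ ≤ ∑ b, (Mh a0 b).re * ‖v a0‖ := by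
          refine Finset.sum_le_sum fun b _ => ?_
          have hb0 : 0 ≤ (Mh a0 b).re := by rw [← hnorm]; exact norm_nonneg _
          exact mul_le_mul_of_nonneg_left (ha0 b (Finset.mem_univ _)) hb0
      _ = lam * ‖v a0‖ := by rw [← Finset.sum_mul, hrow]
  exact le_of_mul_le_mul_right h2 hpos

lemma contraction {D : ℕ} (Mh : Matrix (Fin D) (Fin D) ℂ) (lam : ℝ) (hlam0 : 0 ≤ lam)
    (hnorm : ∀ a b, ‖Mh a b‖ = (Mh a b).re)
    (hrow : ∀ a, (∑ b, (Mh a b).re) = lam)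
    (hcol : ∀ b, (∑ a, (Mh a b).re) = lam)
    (v : Fin D → ℂ) : vecNorm (Mh *ᵥ v) ≤ lam * vecNorm v := by
  have hnn : ∀ a b, 0 ≤ (Mh a b).re := fun a b => by
    rw [← hnorm]; exact norm_nonneg _
  have hkey : (∑ a, ‖(Mh *ᵥ v) a‖ ^ 2) ≤ lam ^ 2 * ∑ b, ‖v b‖ ^ 2 := by
    have hterm : ∀ a, ‖(Mh *ᵥ v) a‖ ^ 2 ≤ lam * ∑ b, (Mh a b).re * ‖v b‖ ^ 2 := by
      intro a
      have h1 : ‖(Mh *ᵥ v) a‖ ≤ ∑ b, (Mh a b).re * ‖v b‖ := by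
        simp only [Matrix.mulVec, dotProduct]
        refine (norm_sum_le _ _).trans (le_of_eq (Finset.sum_congr rfl fun b _ => ?_))
        rw [norm_mul, hnorm]
      have h2 : (∑ b, (Mh a b).re * ‖v b‖) ^ 2
          ≤ (∑ b, (Mh a b).re) * ∑ b, (Mh a b).re * ‖v b‖ ^ 2 := by
        have h3 := Finset.sum_mul_sq_le_sq_mul_sq Finset.univ
          (fun b => Real.sqrt ((Mh a b).re))
          (fun b => Real.sqrt ((Mh a b).re) * ‖v b‖)
        have h4 : ∀ b, Real.sqrt ((Mh a b).re) * (Real.sqrt ((Mh a b).re) * ‖v b‖)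
            = (Mh a b).re * ‖v b‖ := fun b => by
          rw [← mul_assoc, Real.mul_self_sqrt (hnn a b)]
        have h5 : ∀ b, Real.sqrt ((Mh a b).re) ^ 2 = (Mh a b).re := fun b =>
          Real.sq_sqrt (hnn a b)
        have h6 : ∀ b, (Real.sqrt ((Mh a b).re) * ‖v b‖) ^ 2 = (Mh a b).re * ‖v b‖ ^ 2 :=
          fun b => by rw [mul_pow, h5]
        calc (∑ b, (Mh a b).re * ‖v b‖) ^ 2
            = (∑ b, Real.sqrt ((Mh a b).re) * (Real.sqrt ((Mh a b).re) * ‖v b‖)) ^ 2 := by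
              rw [Finset.sum_congr rfl fun b _ => (h4 b).symm]
          _ ≤ (∑ b, Real.sqrt ((Mh a b).re) ^ 2)
              * ∑ b, (Real.sqrt ((Mh a b).re) * ‖v b‖) ^ 2 := h3
          _ = (∑ b, (Mh a b).re) * ∑ b, (Mh a b).re * ‖v b‖ ^ 2 := by
              rw [Finset.sum_congr rfl fun b _ => h5 b,
                Finset.sum_congr rfl fun b _ => h6 b]
      calc ‖(Mh *ᵥ v) a‖ ^ 2 ≤ (∑ b, (Mh a b).re * ‖v b‖) ^ 2 :=
            pow_le_pow_left₀ (norm_nonneg _) h1 2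
        _ ≤ (∑ b, (Mh a b).re) * ∑ b, (Mh a b).re * ‖v b‖ ^ 2 := h2
        _ = lam * ∑ b, (Mh a b).re * ‖v b‖ ^ 2 := by rw [hrow]
    calc (∑ a, ‖(Mh *ᵥ v) a‖ ^ 2) ≤ ∑ a, lam * ∑ b, (Mh a b).re * ‖v b‖ ^ 2 :=
          Finset.sum_le_sum fun a _ => hterm a
      _ = lam * ∑ b, (∑ a, (Mh a b).re) * ‖v b‖ ^ 2 := by
          rw [← Finset.mul_sum]
          congr 1
          rw [Finset.sum_comm]
          exact Finset.sum_congr rfl fun b _ => (Finset.sum_mul _ _ _).symm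
      _ = lam ^ 2 * ∑ b, ‖v b‖ ^ 2 := by
          rw [Finset.sum_congr rfl fun b _ => by rw [hcol b], ← Finset.mul_sum, sq,
            mul_assoc]
  rw [vecNorm, vecNorm]
  calc Real.sqrt (∑ a, ‖(Mh *ᵥ v) a‖ ^ 2) ≤ Real.sqrt (lam ^ 2 * ∑ b, ‖v b‖ ^ 2) :=
        Real.sqrt_le_sqrt hkey
    _ = lam * Real.sqrt (∑ b, ‖v b‖ ^ 2) := by
        rw [Real.sqrt_mul (sq_nonneg lam), Real.sqrt_sq hlam0]

end StabAux
namespace StabAux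

lemma ratio_helper (nr : ℕ) (a b : ℝ) (hb : b ≠ 0) (hn : (nr : ℂ) ≠ 0) :
    ((nr : ℂ))⁻¹ * ((((2 * b : ℝ) : ℂ) * Complex.I)⁻¹
        * (((2 * ((nr : ℝ) * a) : ℝ) : ℂ) * Complex.I))
      = ((a / b : ℝ) : ℂ) := by
  have hI := Complex.I_ne_zero
  have hbc : ((b : ℝ) : ℂ) ≠ 0 := Complex.ofReal_ne_zero.mpr hb
  field_simp
  push_cast
  field_simp

lemma vecNorm_const {D : ℕ} (c : ℂ) :
    vecNorm (fun _ : Fin D => c) = Real.sqrt D * ‖c‖ := by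
  rw [vecNorm]
  simp only [Finset.sum_const, Finset.card_univ, Fintype.card_fin, nsmul_eq_mul]
  rw [Real.sqrt_mul (Nat.cast_nonneg D), Real.sqrt_sq (norm_nonneg c)]

end StabAux
/-- **Lemma A.1(vii) (Exact norm formula for the two-body stability operator at conjugate
spectral parameters).** For `z₁ = conj z₂ ∈ {z, z̄}`, the matrix `M̂(z₁,z₂)` has nonnegative
entries, its Perron–Frobenius eigenvalue is `Im m(z)/(Im m(z)+η)` with eigenvector
`(1,…,1)ᵀ`, and `‖(1 - M̂(z₁,z₂))⁻¹‖ = (Im m(z)+η)/η`. -/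
theorem stability_operator_norm
    (D : ℕ) (hD : 2 ≤ D) (δA : ℝ) (hδA : 0 < δA) (τ : ℝ) (hτ : 0 < τ)
    (N : ℕ) (hN : 0 < N) (A : Matrix (Fin N) (Fin N) ℂ)
    (hA : ∀ x : Fin N → ℂ, vecNorm (A.mulVec x) ≤ (N : ℝ) ^ (-δA) * vecNorm x)
    (m : ℂ → ℂ) (hm : IsSelfConsistent (coupling D N A) m)
    (z : ℂ) (hz1 : ‖z‖ ≤ τ⁻¹) (hz2 : 0 < z.im)
    (z₁ z₂ : ℂ) (h12 : z₂ = starRingEnd ℂ z₁) (hzin : z₁ = z ∨ z₁ = starRingEnd ℂ z)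
    (Mh : Matrix (Fin D) (Fin D) ℂ) (hMh : Mh = Mhat D N (coupling D N A) m z₁ z₂) :
    (∀ a b : Fin D, 0 ≤ (Mh a b).re ∧ (Mh a b).im = 0)
    ∧ Mh.mulVec (fun _ => (1 : ℂ)) = (((m z).im / ((m z).im + z.im) : ℝ) : ℂ) • (fun _ : Fin D => (1 : ℂ))
    ∧ (∀ μc ∈ spectrum ℂ Mh, ‖μc‖ ≤ (m z).im / ((m z).im + z.im))
    ∧ opNorm ((1 - Mh)⁻¹) = ((m z).im + z.im) / z.im := by
  subst h12
  have hL : (coupling D N A)ᴴ = coupling D N A := StabAux.coupling_herm D N A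
  set L := coupling D N A with hLdef
  have hs : 0 < (m z).im := hm.im_pos z hz2
  set lam : ℝ := (m z).im / ((m z).im + z.im) with hlamdef
  have hsη : 0 < (m z).im + z.im := by linarith
  have hlam0 : 0 ≤ lam := by rw [hlamdef]; exact div_nonneg (le_of_lt hs) (le_of_lt hsη)
  have hlam1 : lam < 1 := by rw [hlamdef, div_lt_one hsη]; linarith
  have hmconj : m (starRingEnd ℂ z) = starRingEnd ℂ (m z) := hm.conj_symm z
  set w : ℂ := z₁ + m z₁ with hwdef
  have hcase : ((m z₁).im = (m z).im ∧ w.im = (m z).im + z.im) ∨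
      ((m z₁).im = -(m z).im ∧ w.im = -((m z).im + z.im)) := by
    rcases hzin with h | h
    · left
      constructor
      · rw [h]
      · rw [hwdef, h, Complex.add_im]; ring
    · right
      constructor
      · rw [h, hmconj, Complex.conj_im]
      · rw [hwdef, h, hmconj, Complex.add_im, Complex.conj_im, Complex.conj_im]; ring
  have hwim0 : w.im ≠ 0 := by
    rcases hcase with ⟨_, h⟩ | ⟨_, h⟩ <;> rw [h]
    · exact ne_of_gt (by linarith)
    · exact ne_of_lt (by linarith)
  have hratio : (m z₁).im / w.im = lam := by
    rw [hlamdef]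
    rcases hcase with ⟨h1, h2⟩ | ⟨h1, h2⟩ <;> rw [h1, h2]
    rw [neg_div_neg_eq]
  -- invertibility facts
  have hdet1 : (L - w • 1).det ≠ 0 := StabAux.herm_det_ne hL hwim0
  set M₁ := Mdet L m z₁ with hM1def
  have hM1 : M₁ = (L - w • 1)⁻¹ := by
    rw [hM1def, Mdet, sub_sub, ← add_smul, ← hwdef]
  have hsubH : (L - w • 1)ᴴ = L - (starRingEnd ℂ w) • 1 := by
    rw [Matrix.conjTranspose_sub, hL, Matrix.conjTranspose_smul, Matrix.conjTranspose_one]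
    rfl
  have hw2 : starRingEnd ℂ z₁ + m (starRingEnd ℂ z₁) = starRingEnd ℂ w := by
    rw [hwdef, map_add, hm.conj_symm z₁]
  have hM2 : Mdet L m (starRingEnd ℂ z₁) = M₁ᴴ := by
    have h1 : Mdet L m (starRingEnd ℂ z₁) = (L - (starRingEnd ℂ w) • 1)⁻¹ := by
      rw [Mdet, sub_sub, ← add_smul, hw2]
    rw [h1, ← hsubH, ← Matrix.conjTranspose_nonsing_inv, hM1]
  have hU1 : (L - w • 1) * M₁ = 1 := by
    rw [hM1]; exact Matrix.mul_nonsing_inv _ (isUnit_iff_ne_zero.mpr hdet1)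
  have hU2 : M₁ * (L - w • 1) = 1 := by
    rw [hM1]; exact Matrix.nonsing_inv_mul _ (isUnit_iff_ne_zero.mpr hdet1)
  have hU3 : (L - starRingEnd ℂ w • 1) * M₁ᴴ = 1 := by
    have h2 := congrArg Matrix.conjTranspose hU2
    rwa [Matrix.conjTranspose_mul, Matrix.conjTranspose_one, hsubH] at h2
  have hU4 : M₁ᴴ * (L - starRingEnd ℂ w • 1) = 1 := by
    have h2 := congrArg Matrix.conjTranspose hU1
    rwa [Matrix.conjTranspose_mul, Matrix.conjTranspose_one, hsubH] at h2
  -- Ward identities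
  have hws : w - starRingEnd ℂ w ≠ 0 := by
    rw [Complex.sub_conj]
    exact mul_ne_zero (Complex.ofReal_ne_zero.mpr (mul_ne_zero two_ne_zero hwim0))
      Complex.I_ne_zero
  have hdiff : (L - starRingEnd ℂ w • 1) - (L - w • 1)
      = (w - starRingEnd ℂ w) • (1 : Matrix (Fin D × Fin N) (Fin D × Fin N) ℂ) := by
    rw [sub_sub_sub_cancel_left, ← sub_smul]
  have hWard1 : M₁ᴴ * M₁ = (w - starRingEnd ℂ w)⁻¹ • (M₁ - M₁ᴴ) := by
    have key : M₁ - M₁ᴴ = (w - starRingEnd ℂ w) • (M₁ᴴ * M₁) := by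
      calc M₁ - M₁ᴴ
          = M₁ᴴ * ((L - starRingEnd ℂ w • 1) * M₁) - M₁ᴴ * ((L - w • 1) * M₁) := by
            rw [← Matrix.mul_assoc, hU4, Matrix.one_mul, hU1, Matrix.mul_one]
        _ = M₁ᴴ * (((L - starRingEnd ℂ w • 1) - (L - w • 1)) * M₁) := by
            rw [← Matrix.mul_sub, ← Matrix.sub_mul]
        _ = (w - starRingEnd ℂ w) • (M₁ᴴ * M₁) := by
            rw [hdiff, Matrix.smul_mul, Matrix.one_mul, Matrix.mul_smul]
    rw [key, inv_smul_smul₀ hws]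
  have hWard2 : M₁ * M₁ᴴ = (w - starRingEnd ℂ w)⁻¹ • (M₁ - M₁ᴴ) := by
    have key : M₁ - M₁ᴴ = (w - starRingEnd ℂ w) • (M₁ * M₁ᴴ) := by
      calc M₁ - M₁ᴴ
          = M₁ * ((L - starRingEnd ℂ w • 1) * M₁ᴴ) - M₁ * ((L - w • 1) * M₁ᴴ) := by
            rw [hU3, Matrix.mul_one, ← Matrix.mul_assoc, hU2, Matrix.one_mul]
        _ = M₁ * (((L - starRingEnd ℂ w • 1) - (L - w • 1)) * M₁ᴴ) := by
            rw [← Matrix.mul_sub, ← Matrix.sub_mul]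
        _ = (w - starRingEnd ℂ w) • (M₁ * M₁ᴴ) := by
            rw [hdiff, Matrix.smul_mul, Matrix.one_mul, Matrix.mul_smul]
    rw [key, inv_smul_smul₀ hws]
  -- block traces
  have hDne : (D : ℂ) ≠ 0 := Nat.cast_ne_zero.mpr (by omega)
  have hNne : (N : ℂ) ≠ 0 := Nat.cast_ne_zero.mpr (by omega)
  have hwzim : (z + m z).im ≠ 0 := by
    rw [Complex.add_im]; exact ne_of_gt (by linarith)
  have hMz : Mdet L m z = (L - (z + m z) • 1)⁻¹ := by
    rw [Mdet, sub_sub, ← add_smul]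
  have hcard : ((Fintype.card (Fin D × Fin N) : ℕ) : ℂ) = (D : ℂ) * N := by
    rw [Fintype.card_prod, Fintype.card_fin, Fintype.card_fin]
    push_cast
    ring
  have htot : (∑ p : Fin D × Fin N, Mdet L m z p p) = ((D : ℂ) * N) * m z := by
    have heqn := hm.eqn z hz2
    rw [ntrace] at heqn
    have h1 : ((L - z • 1 - m z • 1)⁻¹ : Matrix (Fin D × Fin N) (Fin D × Fin N) ℂ)
        = Mdet L m z := rfl
    rw [h1, hcard] at heqn
    have h2 : (Mdet L m z).trace = ∑ p : Fin D × Fin N, Mdet L m z p p := by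
      rw [Matrix.trace]
      exact Finset.sum_congr rfl fun p _ => rfl
    rw [h2] at heqn
    have hDN : (D : ℂ) * N ≠ 0 := mul_ne_zero hDne hNne
    field_simp at heqn
    rw [← heqn]
    ring
  have htrz : ∀ c : Fin D, (∑ i : Fin N, Mdet L m z (c, i) (c, i)) = (N : ℂ) * m z := by
    intro c
    have hall : ∀ c' : Fin D,
        (∑ i, Mdet L m z (c', i) (c', i)) = ∑ i, Mdet L m z (c, i) (c, i) := by
      intro c'
      rw [hMz]
      exact StabAux.block_trace_eq hD A hwzim c' c
    have h3 : (∑ c' : Fin D, ∑ i, Mdet L m z (c', i) (c', i)) = ((D : ℂ) * N) * m z := by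
      rw [Fintype.sum_prod_type] at htot
      exact htot
    rw [Finset.sum_congr rfl fun c' _ => hall c', Finset.sum_const, Finset.card_univ,
      Fintype.card_fin, nsmul_eq_mul] at h3
    have h4 : (D : ℂ) * (∑ i, Mdet L m z (c, i) (c, i)) = (D : ℂ) * ((N : ℂ) * m z) := by
      rw [h3]; ring
    exact mul_left_cancel₀ hDne h4
  have htr1 : ∀ c : Fin D, (∑ i : Fin N, M₁ (c, i) (c, i)) = (N : ℂ) * m z₁ := by
    rcases hzin with h | h
    · intro c
      rw [hM1def, h]
      exact htrz c
    · intro c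
      have hMc : M₁ = (Mdet L m z)ᴴ := by
        have h2 := hM2
        rw [h, Complex.conj_conj] at h2
        rw [h2, Matrix.conjTranspose_conjTranspose]
      have h5 : ∀ i : Fin N, (Mdet L m z)ᴴ ((c, i) : Fin D × Fin N) (c, i)
          = starRingEnd ℂ (Mdet L m z (c, i) (c, i)) := fun i => rfl
      rw [hMc, Finset.sum_congr rfl fun i _ => h5 i, ← map_sum, htrz c,
        map_mul (starRingEnd ℂ), map_natCast, h, hmconj]
  -- entries of Mh
  have hMhC : ∀ a b : Fin D, Mh a b
      = (N : ℂ)⁻¹ * ∑ p, ∑ q, (if q.1 = a then (1 : ℂ) else 0) * (M₁ p q * M₁ᴴ q p)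
          * (if p.1 = b then (1 : ℂ) else 0) := by
    intro a b
    rw [hMh]
    simp only [Mhat, Matrix.of_apply, ntrace]
    rw [hM2, ← hM1def, StabAux.trace_proj_proj, hcard]
    have harr : ∀ X : ℂ, (D : ℂ) * (((D : ℂ) * (N : ℂ))⁻¹ * X) = (N : ℂ)⁻¹ * X := by
      intro X
      field_simp
    exact harr _
  have hreal : ∀ a b : Fin D, Mh a b = (((Mh a b).re : ℝ) : ℂ) ∧ 0 ≤ (Mh a b).re := by
    intro a b
    have h1 : Mh a b = (((N : ℝ)⁻¹ * ∑ p, ∑ q, (if q.1 = a then (1 : ℝ) else 0)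
        * Complex.normSq (M₁ p q) * (if p.1 = b then (1 : ℝ) else 0) : ℝ) : ℂ) := by
      rw [hMhC]
      rw [Complex.ofReal_mul, Complex.ofReal_inv, Complex.ofReal_natCast,
        Complex.ofReal_sum]
      congr 1
      refine Finset.sum_congr rfl fun p _ => ?_
      rw [Complex.ofReal_sum]
      refine Finset.sum_congr rfl fun q _ => ?_
      rw [Complex.ofReal_mul, Complex.ofReal_mul]
      have hM2pq : M₁ᴴ q p = starRingEnd ℂ (M₁ p q) := rfl
      rw [hM2pq, Complex.mul_conj]
      simp only [apply_ite Complex.ofReal, Complex.ofReal_one, Complex.ofReal_zero]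
    have h2 : 0 ≤ (N : ℝ)⁻¹ * ∑ p, ∑ q, (if q.1 = a then (1 : ℝ) else 0)
        * Complex.normSq (M₁ p q) * (if p.1 = b then (1 : ℝ) else 0) := by
      apply mul_nonneg (inv_nonneg.mpr (Nat.cast_nonneg N))
      refine Finset.sum_nonneg fun p _ => Finset.sum_nonneg fun q _ => ?_
      refine mul_nonneg (mul_nonneg ?_ (Complex.normSq_nonneg _)) ?_ <;>
        (split_ifs <;> norm_num)
    refine ⟨?_, ?_⟩
    · rw [h1, Complex.ofReal_re]
    · rw [h1, Complex.ofReal_re]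
      exact h2
  -- row sums
  have hrowC : ∀ a : Fin D, (∑ b, Mh a b) = ((lam : ℝ) : ℂ) := by
    intro a
    have e1 : (∑ b, Mh a b)
        = (N : ℂ)⁻¹ * ∑ q, (if q.1 = a then (1 : ℂ) else 0) * ((M₁ᴴ * M₁) q q) := by
      calc (∑ b, Mh a b)
          = (N : ℂ)⁻¹ * ∑ b, ∑ p, ∑ q, (if q.1 = a then (1 : ℂ) else 0)
              * (M₁ p q * M₁ᴴ q p) * (if p.1 = b then (1 : ℂ) else 0) := by
            rw [Finset.mul_sum]
            exact Finset.sum_congr rfl fun b _ => hMhC a b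
        _ = (N : ℂ)⁻¹ * ∑ p, ∑ q, (if q.1 = a then (1 : ℂ) else 0)
              * (M₁ p q * M₁ᴴ q p) := by
            congr 1
            rw [Finset.sum_comm]
            refine Finset.sum_congr rfl fun p _ => ?_
            rw [Finset.sum_comm]
            refine Finset.sum_congr rfl fun q _ => ?_
            rw [← Finset.mul_sum, Finset.sum_ite_eq, if_pos (Finset.mem_univ _), mul_one]
        _ = (N : ℂ)⁻¹ * ∑ q, (if q.1 = a then (1 : ℂ) else 0) * ((M₁ᴴ * M₁) q q) := by
            congr 1
            rw [Finset.sum_comm]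
            refine Finset.sum_congr rfl fun q _ => ?_
            rw [Matrix.mul_apply, Finset.mul_sum]
            exact Finset.sum_congr rfl fun p _ => by ring
    rw [e1, hWard1]
    have e2 : ∀ q : Fin D × Fin N, (if q.1 = a then (1 : ℂ) else 0)
        * (((w - starRingEnd ℂ w)⁻¹ • (M₁ - M₁ᴴ)) q q)
        = (w - starRingEnd ℂ w)⁻¹
            * ((if q.1 = a then M₁ q q else 0) - (if q.1 = a then M₁ᴴ q q else 0)) := by
      intro q
      simp only [Matrix.smul_apply, Matrix.sub_apply, smul_eq_mul]
      split_ifs <;> ring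
    rw [Finset.sum_congr rfl fun q _ => e2 q, ← Finset.mul_sum, Finset.sum_sub_distrib,
      StabAux.sum_block, StabAux.sum_block]
    have e3 : (∑ i, M₁ᴴ ((a, i) : Fin D × Fin N) (a, i))
        = starRingEnd ℂ (∑ i, M₁ ((a, i) : Fin D × Fin N) (a, i)) := by
      rw [map_sum]
      exact Finset.sum_congr rfl fun i _ => rfl
    rw [e3, htr1 a, Complex.sub_conj w, Complex.sub_conj ((N : ℂ) * m z₁)]
    have e5 : ((N : ℂ) * m z₁).im = (N : ℝ) * (m z₁).im := by
      simp [Complex.mul_im]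
    rw [e5, StabAux.ratio_helper N (m z₁).im w.im hwim0 hNne, hratio]
  -- column sums
  have hcolC : ∀ b : Fin D, (∑ a, Mh a b) = ((lam : ℝ) : ℂ) := by
    intro b
    have e1 : (∑ a, Mh a b)
        = (N : ℂ)⁻¹ * ∑ p, (if p.1 = b then (1 : ℂ) else 0) * ((M₁ * M₁ᴴ) p p) := by
      calc (∑ a, Mh a b)
          = (N : ℂ)⁻¹ * ∑ a, ∑ p, ∑ q, (if q.1 = a then (1 : ℂ) else 0)
              * (M₁ p q * M₁ᴴ q p) * (if p.1 = b then (1 : ℂ) else 0) := by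
            rw [Finset.mul_sum]
            exact Finset.sum_congr rfl fun a _ => hMhC a b
        _ = (N : ℂ)⁻¹ * ∑ p, ∑ q, (M₁ p q * M₁ᴴ q p) * (if p.1 = b then (1 : ℂ) else 0) := by
            congr 1
            rw [Finset.sum_comm]
            refine Finset.sum_congr rfl fun p _ => ?_
            rw [Finset.sum_comm]
            refine Finset.sum_congr rfl fun q _ => ?_
            have e6 : ∀ a : Fin D, (if q.1 = a then (1 : ℂ) else 0)
                * (M₁ p q * M₁ᴴ q p) * (if p.1 = b then (1 : ℂ) else 0)
                = (if q.1 = a then (1 : ℂ) else 0)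
                  * ((M₁ p q * M₁ᴴ q p) * (if p.1 = b then (1 : ℂ) else 0)) := by
              intro a; ring
            rw [Finset.sum_congr rfl fun a _ => e6 a, ← Finset.sum_mul,
              Finset.sum_ite_eq, if_pos (Finset.mem_univ _), one_mul]
        _ = (N : ℂ)⁻¹ * ∑ p, (if p.1 = b then (1 : ℂ) else 0) * ((M₁ * M₁ᴴ) p p) := by
            congr 1
            refine Finset.sum_congr rfl fun p _ => ?_
            rw [Matrix.mul_apply, Finset.mul_sum]
            exact Finset.sum_congr rfl fun q _ => by ring
    rw [e1, hWard2]
    have e2 : ∀ p : Fin D × Fin N, (if p.1 = b then (1 : ℂ) else 0)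
        * (((w - starRingEnd ℂ w)⁻¹ • (M₁ - M₁ᴴ)) p p)
        = (w - starRingEnd ℂ w)⁻¹
            * ((if p.1 = b then M₁ p p else 0) - (if p.1 = b then M₁ᴴ p p else 0)) := by
      intro p
      simp only [Matrix.smul_apply, Matrix.sub_apply, smul_eq_mul]
      split_ifs <;> ring
    rw [Finset.sum_congr rfl fun p _ => e2 p, ← Finset.mul_sum, Finset.sum_sub_distrib,
      StabAux.sum_block, StabAux.sum_block]
    have e3 : (∑ i, M₁ᴴ ((b, i) : Fin D × Fin N) (b, i))
        = starRingEnd ℂ (∑ i, M₁ ((b, i) : Fin D × Fin N) (b, i)) := by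
      rw [map_sum]
      exact Finset.sum_congr rfl fun i _ => rfl
    rw [e3, htr1 b, Complex.sub_conj w, Complex.sub_conj ((N : ℂ) * m z₁)]
    have e5 : ((N : ℂ) * m z₁).im = (N : ℝ) * (m z₁).im := by
      simp [Complex.mul_im]
    rw [e5, StabAux.ratio_helper N (m z₁).im w.im hwim0 hNne, hratio]
  -- real forms
  have hrowR : ∀ a : Fin D, (∑ b, (Mh a b).re) = lam := by
    intro a
    have h2 := congrArg Complex.re (hrowC a)
    rwa [Complex.re_sum, Complex.ofReal_re] at h2
  have hcolR : ∀ b : Fin D, (∑ a, (Mh a b).re) = lam := by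
    intro b
    have h2 := congrArg Complex.re (hcolC b)
    rwa [Complex.re_sum, Complex.ofReal_re] at h2
  have hnormMh : ∀ a b : Fin D, ‖Mh a b‖ = (Mh a b).re := by
    intro a b
    rw [(hreal a b).1, Complex.norm_real, Real.norm_eq_abs, Complex.ofReal_re,
      abs_of_nonneg (hreal a b).2]
  -- the eigenvector statement
  have hones : Mh.mulVec (fun _ => (1 : ℂ)) = ((lam : ℝ) : ℂ) • (fun _ : Fin D => (1 : ℂ)) := by
    funext a
    simp only [Matrix.mulVec, dotProduct, mul_one, Pi.smul_apply, smul_eq_mul]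
    rw [hrowC a]
  -- invertibility of 1 - Mh
  have hdetT : (1 - Mh).det ≠ 0 := by
    intro h0
    obtain ⟨v, hv0, hv⟩ := Matrix.exists_mulVec_eq_zero_iff.mpr h0
    have hMv : Mh *ᵥ v = (1 : ℂ) • v := by
      rw [Matrix.sub_mulVec, Matrix.one_mulVec] at hv
      rw [one_smul]
      exact (sub_eq_zero.mp hv).symm
    have h2 := StabAux.eig_bound Mh lam hnormMh hrowR hv0 hMv
    rw [norm_one] at h2
    linarith
  set T := (1 - Mh)⁻¹ with hTdef
  have hT1 : (1 - Mh) * T = 1 := Matrix.mul_nonsing_inv _ (isUnit_iff_ne_zero.mpr hdetT)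
  have hT2 : T * (1 - Mh) = 1 := Matrix.nonsing_inv_mul _ (isUnit_iff_ne_zero.mpr hdetT)
  have hlamne : ((1 - lam : ℝ) : ℂ) ≠ 0 := Complex.ofReal_ne_zero.mpr (by linarith)
  have h1mones : (1 - Mh) *ᵥ (fun _ => (1 : ℂ))
      = ((1 - lam : ℝ) : ℂ) • (fun _ : Fin D => (1 : ℂ)) := by
    rw [Matrix.sub_mulVec, Matrix.one_mulVec, hones]
    funext a
    simp only [Pi.sub_apply, Pi.smul_apply, smul_eq_mul, mul_one]
    push_cast
    ring
  have hTones : T *ᵥ (fun _ => (1 : ℂ))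
      = ((1 - lam : ℝ) : ℂ)⁻¹ • (fun _ : Fin D => (1 : ℂ)) := by
    have h5 : T *ᵥ ((1 - Mh) *ᵥ (fun _ => (1 : ℂ))) = (fun _ : Fin D => (1 : ℂ)) := by
      rw [Matrix.mulVec_mulVec, hT2, Matrix.one_mulVec]
    rw [h1mones, Matrix.mulVec_smul] at h5
    calc T *ᵥ (fun _ => (1 : ℂ))
        = ((1 - lam : ℝ) : ℂ)⁻¹ • (((1 - lam : ℝ) : ℂ) • (T *ᵥ (fun _ => (1 : ℂ)))) :=
          (inv_smul_smul₀ hlamne _).symm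
      _ = ((1 - lam : ℝ) : ℂ)⁻¹ • (fun _ : Fin D => (1 : ℂ)) := by rw [h5]
  -- upper bound for T
  have hub : ∀ x : Fin D → ℂ, vecNorm (T *ᵥ x) ≤ (1 - lam)⁻¹ * vecNorm x := by
    intro x
    set y := T *ᵥ x with hydef
    have h6 : (1 - Mh) *ᵥ y = x := by
      rw [hydef, Matrix.mulVec_mulVec, hT1, Matrix.one_mulVec]
    have h6' : y - Mh *ᵥ y = x := by
      rwa [Matrix.sub_mulVec, Matrix.one_mulVec] at h6
    have h7 : x + Mh *ᵥ y = y := by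
      rw [← h6']
      abel
    have h8 : vecNorm y ≤ vecNorm x + lam * vecNorm y := by
      calc vecNorm y = vecNorm (x + Mh *ᵥ y) := by rw [h7]
        _ ≤ vecNorm x + vecNorm (Mh *ᵥ y) := StabAux.vecNorm_add_le _ _
        _ ≤ vecNorm x + lam * vecNorm y := by
            have h9 := StabAux.contraction Mh lam hlam0 hnormMh hrowR hcolR y
            linarith
    have h9 : 0 < 1 - lam := by linarith
    have h10 : vecNorm y * (1 - lam) ≤ vecNorm x := by nlinarith [h8]
    calc vecNorm y = (vecNorm y * (1 - lam)) * (1 - lam)⁻¹ := by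
          field_simp
      _ ≤ vecNorm x * (1 - lam)⁻¹ :=
          mul_le_mul_of_nonneg_right h10 (inv_nonneg.mpr (by linarith))
      _ = (1 - lam)⁻¹ * vecNorm x := by ring
  -- value of the norm
  have hval : (1 - lam)⁻¹ = ((m z).im + z.im) / z.im := by
    rw [hlamdef]
    rw [show (1 : ℝ) - (m z).im / ((m z).im + z.im) = z.im / ((m z).im + z.im) by
      field_simp; ring]
    rw [inv_div]
  have hDR : (0 : ℝ) < (D : ℝ) := by
    have : (0 : ℕ) < D := by omega
    exact_mod_cast this
  have hsD : Real.sqrt D ≠ 0 := ne_of_gt (Real.sqrt_pos.mpr hDR)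
  -- the distinguished unit vector
  set x0 : Fin D → ℂ := fun _ => (((Real.sqrt D)⁻¹ : ℝ) : ℂ) with hx0def
  have hx0n : vecNorm x0 = 1 := by
    rw [hx0def, StabAux.vecNorm_const, Complex.norm_real, Real.norm_eq_abs,
      abs_of_nonneg (by positivity)]
    rw [mul_inv_cancel₀ hsD]
  have hx0smul : x0 = (((Real.sqrt D)⁻¹ : ℝ) : ℂ) • (fun _ : Fin D => (1 : ℂ)) := by
    funext a
    simp [hx0def]
  have hTx0 : T *ᵥ x0
      = fun _ : Fin D => ((((Real.sqrt D)⁻¹ : ℝ) : ℂ) * ((1 - lam : ℝ) : ℂ)⁻¹) := by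
    rw [hx0smul, Matrix.mulVec_smul, hTones]
    funext a
    simp [smul_eq_mul]
  have hTx0n : vecNorm (T *ᵥ x0) = (1 - lam)⁻¹ := by
    have e1 : ‖(((Real.sqrt D)⁻¹ : ℝ) : ℂ)‖ = (Real.sqrt D)⁻¹ := by
      rw [Complex.norm_real, Real.norm_eq_abs, abs_of_nonneg (by positivity)]
    have e2 : ‖(((1 - lam : ℝ) : ℝ) : ℂ)⁻¹‖ = (1 - lam)⁻¹ := by
      rw [norm_inv, Complex.norm_real, Real.norm_eq_abs,
        abs_of_nonneg (by linarith : (0:ℝ) ≤ 1 - lam)]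
    rw [hTx0, StabAux.vecNorm_const, norm_mul, e1, e2, ← mul_assoc,
      mul_inv_cancel₀ hsD, one_mul]
  -- assembling everything
  haveI : Nonempty {x : Fin D → ℂ // vecNorm x ≤ 1} := by
    refine ⟨⟨0, ?_⟩⟩
    rw [vecNorm]
    simp
  refine ⟨fun a b => ⟨(hreal a b).2, ?_⟩, hones, ?_, ?_⟩
  · rw [(hreal a b).1, Complex.ofReal_im]
  · intro μc hμ
    obtain ⟨v, hv0, hv⟩ := StabAux.spectrum_exists_eigenvector Mh hμ
    exact StabAux.eig_bound Mh lam hnormMh hrowR hv0 hv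
  · rw [← hval]
    rw [opNorm]
    apply le_antisymm
    · apply ciSup_le
      intro x
      refine (hub x.1).trans ?_
      calc (1 - lam)⁻¹ * vecNorm x.1 ≤ (1 - lam)⁻¹ * 1 :=
            mul_le_mul_of_nonneg_left x.2 (inv_nonneg.mpr (by linarith))
        _ = (1 - lam)⁻¹ := mul_one _
    · have hb : BddAbove (Set.range fun x : {x : Fin D → ℂ // vecNorm x ≤ 1}
          => vecNorm (T.mulVec x.1)) := by
        refine ⟨(1 - lam)⁻¹, ?_⟩
        rintro r ⟨x, rfl⟩
        refine (hub x.1).trans ?_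
        calc (1 - lam)⁻¹ * vecNorm x.1 ≤ (1 - lam)⁻¹ * 1 :=
              mul_le_mul_of_nonneg_left x.2 (inv_nonneg.mpr (by linarith))
          _ = (1 - lam)⁻¹ := mul_one _
      have h11 := le_ciSup hb ⟨x0, le_of_eq hx0n⟩
      rwa [hTx0n] at h11

end
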